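/- Let M ∈ ℕ with M ≥ 2 and let H ∈ ℝ^{(M−1)×(M−1)} be the matrix with entries (for m₁, m₂ ∈ {1,…,M−1}) H_{m₁,m₂} = (1/M)·( (M − max(m₁,m₂))·min(m₁,m₂) − 3·m₁·(M−m₁)·m₂·(M−m₂)/(M²+11) ). Then the sum of all entries of H satisfies Σ_{m₁=1}^{M−1} Σ_{m₂=1}^{M−1} H_{m₁,m₂} = (M−1)·M·(M+1)/(M²+11). -/

import Mathlib

open Matrix BigOperators

lemma sls_gauss (n : ℕ) : 2 * ∑ k ∈ Finset.range n, (k+1) = n*(n+1) := by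
  induction n with
  | zero => simp
  | succ n ih => rw [Finset.sum_range_succ, Nat.mul_add, ih]; ring

lemma sls_sum_min (n : ℕ) :
    6 * ∑ k ∈ Finset.range n, ∑ l ∈ Finset.range n, min (k+1) (l+1)
      = n*(n+1)*(2*n+1) := by
  induction n with
  | zero => simp
  | succ n ih =>
    rw [Finset.sum_range_succ]
    have e1 : ∑ l ∈ Finset.range (n+1), min (n+1) (l+1)
        = (∑ l ∈ Finset.range n, (l+1)) + (n+1) := by
      rw [Finset.sum_range_succ, min_self]
      congr 1
      exact Finset.sum_congr rfl fun l hl =>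
        min_eq_right (by have := Finset.mem_range.mp hl; omega)
    have e2 : ∑ k ∈ Finset.range n, ∑ l ∈ Finset.range (n+1), min (k+1) (l+1)
        = (∑ k ∈ Finset.range n, ∑ l ∈ Finset.range n, min (k+1) (l+1))
          + ∑ k ∈ Finset.range n, (k+1) := by
      rw [← Finset.sum_add_distrib]
      exact Finset.sum_congr rfl fun k hk => by
        rw [Finset.sum_range_succ]
        congr 1
        exact min_eq_left (by have := Finset.mem_range.mp hk; omega)
    rw [e1, e2]
    have hg := sls_gauss n
    zify at ih hg ⊢
    linear_combination ih + 6*hg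

lemma sls_sumB (n : ℕ) : ∑ k ∈ Finset.range n, ((k:ℝ)+1) = (n:ℝ)*((n:ℝ)+1)/2 := by
  induction n with
  | zero => simp
  | succ n ih => rw [Finset.sum_range_succ, ih]; push_cast; ring

lemma sls_sumD (n : ℕ) :
    ∑ k ∈ Finset.range n, ((k:ℝ)+1)^2 = (n:ℝ)*((n:ℝ)+1)*(2*(n:ℝ)+1)/6 := by
  induction n with
  | zero => simp
  | succ n ih => rw [Finset.sum_range_succ, ih]; push_cast; ring

lemma sls_fin_double (n : ℕ) (f : ℕ → ℕ → ℝ) :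
    ∑ k : Fin n, ∑ l : Fin n, f k l
      = ∑ k ∈ Finset.range n, ∑ l ∈ Finset.range n, f k l := by
  rw [← Fin.sum_univ_eq_sum_range (fun k => ∑ l ∈ Finset.range n, f k l) n]
  exact Finset.sum_congr rfl fun k _ => Fin.sum_univ_eq_sum_range (fun l => f k l) n

lemma sls_key (M : ℕ) (hM : 2 ≤ M) (a b : ℕ) :
      (1 / (M : ℝ)) *
        (((M : ℝ) - ((max (a + 1) (b + 1) : ℕ) : ℝ)) *
            ((min (a + 1) (b + 1) : ℕ) : ℝ) -
          3 * ((a + 1 : ℕ) : ℝ) * ((M : ℝ) - ((a + 1 : ℕ) : ℝ)) *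
            ((b + 1 : ℕ) : ℝ) * ((M : ℝ) - ((b + 1 : ℕ) : ℝ)) /
            ((M : ℝ) ^ 2 + 11))
    = ((min (a+1) (b+1) : ℕ) : ℝ)
      - (1/(M:ℝ)) * (((a:ℝ)+1) * ((b:ℝ)+1))
      - (3/((M:ℝ)*((M:ℝ)^2+11))) *
          ((((a:ℝ)+1)*((M:ℝ)-((a:ℝ)+1))) * (((b:ℝ)+1)*((M:ℝ)-((b:ℝ)+1)))) := by
  have hM0 : (M:ℝ) ≠ 0 := by
    have : 0 < M := by omega
    exact_mod_cast this.ne'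
  have hD : (M:ℝ)^2 + 11 ≠ 0 := by positivity
  have hmm : ((min (a+1) (b+1) : ℕ):ℝ) * ((max (a+1) (b+1) : ℕ):ℝ)
      = ((a:ℝ)+1) * ((b:ℝ)+1) := by
    rw [← Nat.cast_mul, min_mul_max]
    push_cast; ring
  push_cast at hmm ⊢
  field_simp
  linear_combination (-((M:ℝ)^2+11))*hmm

lemma sls_split (n : ℕ) (c₁ c₂ : ℝ) (mn : ℕ → ℕ → ℝ) (f g : ℕ → ℝ) :
    ∑ k ∈ Finset.range n, ∑ l ∈ Finset.range n,
        (mn k l - c₁ * (f k * f l) - c₂ * (g k * g l))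
    = (∑ k ∈ Finset.range n, ∑ l ∈ Finset.range n, mn k l)
      - c₁ * ((∑ k ∈ Finset.range n, f k) * (∑ k ∈ Finset.range n, f k))
      - c₂ * ((∑ k ∈ Finset.range n, g k) * (∑ k ∈ Finset.range n, g k)) := by
  rw [Finset.sum_mul_sum, Finset.sum_mul_sum]
  simp only [Finset.mul_sum, ← Finset.sum_sub_distrib]

/-- The double-sum identity `γ(M) = 𝟙ᵀ G⁻¹ 𝟙 = (M−1)M(M+1)/(M²+11)` from the
single-source SLS-ESPRIT analysis (Appendix G of the paper), where `H = G⁻¹` is the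
explicit inverse established in Lemma 4 of the paper. -/
theorem sls_gamma_sum
    (M : ℕ) (hM : 2 ≤ M)
    (H : Matrix (Fin (M - 1)) (Fin (M - 1)) ℝ)
    (hH : ∀ k l, H k l =
      (1 / (M : ℝ)) *
        (((M : ℝ) - ((max ((k : ℕ) + 1) ((l : ℕ) + 1) : ℕ) : ℝ)) *
            ((min ((k : ℕ) + 1) ((l : ℕ) + 1) : ℕ) : ℝ) -
          3 * (((k : ℕ) + 1 : ℕ) : ℝ) * ((M : ℝ) - (((k : ℕ) + 1 : ℕ) : ℝ)) *
            (((l : ℕ) + 1 : ℕ) : ℝ) * ((M : ℝ) - (((l : ℕ) + 1 : ℕ) : ℝ)) /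
            ((M : ℝ) ^ 2 + 11))) :
    ∑ k : Fin (M - 1), ∑ l : Fin (M - 1), H k l =
      ((M : ℝ) - 1) * (M : ℝ) * ((M : ℝ) + 1) / ((M : ℝ) ^ 2 + 11) := by
  have hM0 : (M:ℝ) ≠ 0 := by
    have : 0 < M := by omega
    exact_mod_cast this.ne'
  have hD : (M:ℝ)^2 + 11 ≠ 0 := by positivity
  set n := M - 1 with hn
  have hMR : (M:ℝ) = (n:ℝ) + 1 := by
    have : M = n + 1 := by omega
    rw [this]; push_cast; ring
  simp only [hH]
  rw [sls_fin_double n (fun a b =>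
      (1 / (M : ℝ)) *
        (((M : ℝ) - ((max (a + 1) (b + 1) : ℕ) : ℝ)) *
            ((min (a + 1) (b + 1) : ℕ) : ℝ) -
          3 * ((a + 1 : ℕ) : ℝ) * ((M : ℝ) - ((a + 1 : ℕ) : ℝ)) *
            ((b + 1 : ℕ) : ℝ) * ((M : ℝ) - ((b + 1 : ℕ) : ℝ)) /
            ((M : ℝ) ^ 2 + 11)))]
  have hpt : ∀ a ∈ Finset.range n, ∀ b ∈ Finset.range n,
      (1 / (M : ℝ)) *
        (((M : ℝ) - ((max (a + 1) (b + 1) : ℕ) : ℝ)) *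
            ((min (a + 1) (b + 1) : ℕ) : ℝ) -
          3 * ((a + 1 : ℕ) : ℝ) * ((M : ℝ) - ((a + 1 : ℕ) : ℝ)) *
            ((b + 1 : ℕ) : ℝ) * ((M : ℝ) - ((b + 1 : ℕ) : ℝ)) /
            ((M : ℝ) ^ 2 + 11))
      = ((min (a+1) (b+1) : ℕ) : ℝ)
        - (1/(M:ℝ)) * ((((a:ℝ)+1)) * (((b:ℝ)+1)))
        - (3/((M:ℝ)*((M:ℝ)^2+11))) *
            (((((a:ℝ)+1)*((M:ℝ)-((a:ℝ)+1)))) * ((((b:ℝ)+1)*((M:ℝ)-((b:ℝ)+1))))) :=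
    fun a _ b _ => sls_key M hM a b
  rw [Finset.sum_congr rfl fun a ha => Finset.sum_congr rfl fun b hb => hpt a ha b hb]
  rw [sls_split n (1/(M:ℝ)) (3/((M:ℝ)*((M:ℝ)^2+11)))
      (fun a b => ((min (a+1) (b+1) : ℕ) : ℝ))
      (fun a => ((a:ℝ)+1))
      (fun a => ((a:ℝ)+1)*((M:ℝ)-((a:ℝ)+1)))]
  -- evaluate the three sums
  have hA : (∑ k ∈ Finset.range n, ∑ l ∈ Finset.range n, ((min (k+1) (l+1) : ℕ):ℝ))
      = (n:ℝ)*((n:ℝ)+1)*(2*(n:ℝ)+1)/6 := by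
    have h := sls_sum_min n
    have h' : (6:ℝ) * ∑ k ∈ Finset.range n, ∑ l ∈ Finset.range n,
        ((min (k+1) (l+1) : ℕ):ℝ) = (n:ℝ)*((n:ℝ)+1)*(2*(n:ℝ)+1) := by
      exact_mod_cast congrArg (Nat.cast (R := ℝ)) h
    linarith
  have hC : (∑ k ∈ Finset.range n, (((k:ℝ)+1)*((M:ℝ)-((k:ℝ)+1))))
      = (n:ℝ)*((n:ℝ)+1)*((n:ℝ)+2)/6 := by
    have e : ∀ k ∈ Finset.range n,
        ((k:ℝ)+1)*((M:ℝ)-((k:ℝ)+1)) = (M:ℝ)*((k:ℝ)+1) - ((k:ℝ)+1)^2 :=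
      fun k _ => by ring
    rw [Finset.sum_congr rfl e, Finset.sum_sub_distrib, ← Finset.mul_sum,
        sls_sumB, sls_sumD, hMR]
    ring
  rw [hA, sls_sumB, hC, hMR]
  have hn0 : ((n:ℝ)+1) ≠ 0 := by positivity
  have hd2 : ((n:ℝ)+1)^2 + 11 ≠ 0 := by positivity
  field_simp
  ring
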